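/- Correctness of the fixed-point algorithm: let α be a similarity of ratio r ≠ 1 with fixed point C. Suppose P, Q, R are non-collinear with P' = α(P), Q' = α(Q), R' = α(R), line m = PQ not parallel to m' = P'Q', let n be the line through R parallel to m and n' the line through R' parallel to m', and suppose C does not lie on m or n. If D is the intersection point of m and m', and E is the intersection point of n and n', then C lies on line DE. -/

import Mathlib

/-- Auxiliary algebra lemma: if `x = w + s • b 0` and `x = L w + s' • b 1` where
`L (b 0) = b 1`, then `x` is the explicit multiple `(b.repr w 1)` of the fixed vector
`(b.repr (L (b 1)) 0) • b 0 + b 1`. -/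
lemma fixed_point_aux {V : Type*} [AddCommGroup V] [Module ℝ V] (b : Module.Basis (Fin 2) ℝ V)
    (L : V →ₗ[ℝ] V) (hL : L (b 0) = b 1) (w x : V) (s s' : ℝ)
    (h1 : x = w + s • b 0) (h2 : x = L w + s' • b 1) :
    x = (b.repr w 1) • ((b.repr (L (b 1)) 0) • b 0 + b 1) := by
  have hw : w = b.repr w 0 • b 0 + b.repr w 1 • b 1 := by
    conv_lhs => rw [← b.sum_repr w]
    simp only [Fin.sum_univ_two]
  apply b.ext_elem
  intro i
  fin_cases i
  · rw [h2]
    conv_lhs => rw [hw]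
    simp [map_add, map_smul, hL, Module.Basis.repr_self]
  · rw [h1]
    conv_lhs => rw [hw]
    simp [map_add, map_smul, Module.Basis.repr_self]

theorem fixed_point_algorithm_correct
    (α : EuclideanSpace ℝ (Fin 2) → EuclideanSpace ℝ (Fin 2)) (r : ℝ) (hr : 0 < r) (hr1 : r ≠ 1)
    (hα : ∀ P Q, dist (α P) (α Q) = r * dist P Q)
    (C : EuclideanSpace ℝ (Fin 2)) (hC : α C = C)
    (P Q R : EuclideanSpace ℝ (Fin 2))
    (hPQR : ¬ Collinear ℝ ({P, Q, R} : Set (EuclideanSpace ℝ (Fin 2))))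
    (m m' n n' : AffineSubspace ℝ (EuclideanSpace ℝ (Fin 2)))
    (hm : m = affineSpan ℝ ({P, Q} : Set (EuclideanSpace ℝ (Fin 2))))
    (hm' : m' = affineSpan ℝ ({α P, α Q} : Set (EuclideanSpace ℝ (Fin 2))))
    (hmm' : m.direction ≠ m'.direction)
    (hn : Module.finrank ℝ n.direction = 1) (hRn : R ∈ n) (hnm : n.direction = m.direction)
    (hn' : Module.finrank ℝ n'.direction = 1) (hRn' : α R ∈ n') (hnm' : n'.direction = m'.direction)
    (hCm : C ∉ m) (hCn : C ∉ n)
    (D E : EuclideanSpace ℝ (Fin 2))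
    (hD : D ∈ m ∧ D ∈ m') (hE : E ∈ n ∧ E ∈ n') :
    Collinear ℝ ({C, D, E} : Set (EuclideanSpace ℝ (Fin 2))) := by
  -- α is Lipschitz, hence continuous
  have hlip : LipschitzWith r.toNNReal α := by
    apply LipschitzWith.of_dist_le_mul
    intro x y
    rw [hα, Real.coe_toNNReal r hr.le]
  -- α maps midpoints to midpoints
  have hmid : ∀ x y, α (midpoint ℝ x y) = midpoint ℝ (α x) (α y) := by
    intro x y
    apply eq_midpoint_of_dist_eq_half
    · rw [hα, hα, dist_left_midpoint, Real.norm_ofNat]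
      ring
    · rw [hα, hα, dist_midpoint_right, Real.norm_ofNat]
      ring
  -- α is affine
  set f : EuclideanSpace ℝ (Fin 2) →ᵃ[ℝ] EuclideanSpace ℝ (Fin 2) :=
    AffineMap.ofMapMidpoint α hmid hlip.continuous with hf
  have hfα : ∀ x, f x = α x := fun x => rfl
  set L := f.linear with hLdef
  have hL : ∀ x, α x - C = L (x - C) := by
    intro x
    have := f.linearMap_vsub x C
    rw [hfα, hfα] at this
    simpa [hC] using this.symm
  -- basic nondegeneracy
  have hPQ : P ≠ Q := by
    intro h
    apply hPQR
    subst h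
    simp only [Set.insert_comm, Set.insert_idem]
    exact collinear_pair ℝ P R
  set u : EuclideanSpace ℝ (Fin 2) := Q - P with hu
  set v : EuclideanSpace ℝ (Fin 2) := α Q - α P with hv
  have hu0 : u ≠ 0 := sub_ne_zero_of_ne (Ne.symm hPQ)
  have hαPQ : α P ≠ α Q := by
    intro h
    apply hPQ
    have h2 := hα P Q
    rw [h, dist_self] at h2
    exact dist_eq_zero.mp ((mul_eq_zero.mp h2.symm).resolve_left hr.ne')
  have hv0 : v ≠ 0 := sub_ne_zero_of_ne (Ne.symm hαPQ)
  have hLu : L u = v := by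
    have h1 := hL Q
    have h2 := hL P
    have : α Q - α P = L (Q - C) - L (P - C) := by rw [← h1, ← h2]; abel
    rw [← map_sub] at this
    rw [hv, hu, this]
    congr 1
    abel
  -- directions
  have hmdir : m.direction = ℝ ∙ u := by
    rw [hm, direction_affineSpan, vectorSpan_pair_rev]
    simp only [vsub_eq_sub]
    rfl
  have hm'dir : m'.direction = ℝ ∙ v := by
    rw [hm', direction_affineSpan, vectorSpan_pair_rev]
    simp only [vsub_eq_sub]
    rfl
  -- u and v are independent
  have hind : LinearIndependent ℝ ![u, v] := by
    rw [linearIndependent_fin2]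
    refine ⟨by simpa using hv0, fun a ha => ?_⟩
    simp only [Matrix.cons_val_one, Matrix.head_cons, Matrix.cons_val_zero] at ha
    have ha0 : a ≠ 0 := by
      intro h
      rw [h, zero_smul] at ha
      exact hu0 ha.symm
    apply hmm'
    rw [hmdir, hm'dir, ← ha, Submodule.span_singleton_smul_eq (isUnit_iff_ne_zero.mpr ha0)]
  have hcard : Fintype.card (Fin 2) = Module.finrank ℝ (EuclideanSpace ℝ (Fin 2)) := by
    simp
  set b : Module.Basis (Fin 2) ℝ (EuclideanSpace ℝ (Fin 2)) :=
    basisOfLinearIndependentOfCardEqFinrank hind hcard with hb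
  have hb0 : b 0 = u := by rw [hb, coe_basisOfLinearIndependentOfCardEqFinrank]; rfl
  have hb1 : b 1 = v := by rw [hb, coe_basisOfLinearIndependentOfCardEqFinrank]; rfl
  -- membership facts
  have hPm : P ∈ m := by rw [hm]; exact subset_affineSpan ℝ _ (by simp)
  have hαPm' : α P ∈ m' := by rw [hm']; exact subset_affineSpan ℝ _ (by simp)
  have hDs : ∃ s : ℝ, D - C = (P - C) + s • u := by
    have h1 : D -ᵥ P ∈ m.direction := AffineSubspace.vsub_mem_direction hD.1 hPm
    rw [hmdir, Submodule.mem_span_singleton] at h1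
    obtain ⟨s, hs⟩ := h1
    refine ⟨s, ?_⟩
    rw [hs]
    simp only [vsub_eq_sub]
    abel
  have hDs' : ∃ s' : ℝ, D - C = L (P - C) + s' • v := by
    have h1 : D -ᵥ α P ∈ m'.direction := AffineSubspace.vsub_mem_direction hD.2 hαPm'
    rw [hm'dir, Submodule.mem_span_singleton] at h1
    obtain ⟨s', hs'⟩ := h1
    refine ⟨s', ?_⟩
    rw [hs', ← hL P]
    simp only [vsub_eq_sub]
    abel
  have hEt : ∃ t : ℝ, E - C = (R - C) + t • u := by
    have h1 : E -ᵥ R ∈ n.direction := AffineSubspace.vsub_mem_direction hE.1 hRn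
    rw [hnm, hmdir, Submodule.mem_span_singleton] at h1
    obtain ⟨t, ht⟩ := h1
    refine ⟨t, ?_⟩
    rw [ht]
    simp only [vsub_eq_sub]
    abel
  have hEt' : ∃ t' : ℝ, E - C = L (R - C) + t' • v := by
    have h1 : E -ᵥ α R ∈ n'.direction := AffineSubspace.vsub_mem_direction hE.2 hRn'
    rw [hnm', hm'dir, Submodule.mem_span_singleton] at h1
    obtain ⟨t', ht'⟩ := h1
    refine ⟨t', ?_⟩
    rw [ht', ← hL R]
    simp only [vsub_eq_sub]
    abel
  obtain ⟨s, hs⟩ := hDs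
  obtain ⟨s', hs'⟩ := hDs'
  obtain ⟨t, ht⟩ := hEt
  obtain ⟨t', ht'⟩ := hEt'
  have hLb : L (b 0) = b 1 := by rw [hb0, hb1, hLu]
  set e : EuclideanSpace ℝ (Fin 2) := (b.repr (L (b 1)) 0) • b 0 + b 1 with he
  have hDe : D - C = (b.repr (P - C) 1) • e :=
    fixed_point_aux b L hLb (P - C) (D - C) s s' (by rw [hb0]; exact hs) (by rw [hb1]; exact hs')
  have hEe : E - C = (b.repr (R - C) 1) • e :=
    fixed_point_aux b L hLb (R - C) (E - C) t t' (by rw [hb0]; exact ht) (by rw [hb1]; exact ht')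
  rw [collinear_iff_exists_forall_eq_smul_vadd]
  refine ⟨C, e, fun p hp => ?_⟩
  simp only [Set.mem_insert_iff, Set.mem_singleton_iff] at hp
  rcases hp with rfl | rfl | rfl
  · exact ⟨0, by simp⟩
  · exact ⟨b.repr (P - C) 1, by rw [← hDe]; simp [vadd_eq_add]⟩
  · exact ⟨b.repr (R - C) 1, by rw [← hEe]; simp [vadd_eq_add]⟩
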